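/- arXiv:1101.4283 — 5 statements merged into one kernel-verified Lean document; each statement's English description precedes it below -/
import Mathlib

section
/- Let G be a directed multigraph, E an Eulerian extension of G (a multiset of arcs such that G + E is Eulerian), and t a maximum-length trail in the multigraph (V(G), E). Then t is either closed, or its initial vertex has positive balance in G and its terminal vertex has negative balance in G. -/
/-!  STATEMENT 1: If `E` is an Eulerian extension of a directed multigraph `G` and `t` is a
maximum-length trail in the multigraph `(V(G), E)`, then `t` is either closed, or it starts
in a vertex of positive balance of `G` and ends in a vertex of negative balance of `G`. -/

namespace Stmt1

variable {V : Type*}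

def IsWalkFrom : V → V → List (V × V) → Prop
  | u, w, [] => u = w
  | u, w, a :: L => a.1 = u ∧ IsWalkFrom a.2 w L

def indeg [DecidableEq V] (A : Multiset (V × V)) (v : V) : ℕ :=
  Multiset.card (A.filter fun a => a.2 = v)

def outdeg [DecidableEq V] (A : Multiset (V × V)) (v : V) : ℕ :=
  Multiset.card (A.filter fun a => a.1 = v)

/-- Balance of a vertex: indegree minus outdegree. -/
def balance [DecidableEq V] (A : Multiset (V × V)) (v : V) : ℤ :=
  (indeg A v : ℤ) - (outdeg A v : ℤ)

def Connected (A : Multiset (V × V)) : Prop :=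
  ∀ u v : V, Relation.ReflTransGen (fun x y => (x, y) ∈ A ∨ (y, x) ∈ A) u v

def IsEulerian (A : Multiset (V × V)) : Prop :=
  ∃ (v : V) (L : List (V × V)), IsWalkFrom v v L ∧ (↑L : Multiset (V × V)) = A ∧
    ∀ x : V, x = v ∨ ∃ a ∈ L, a.1 = x ∨ a.2 = x

lemma balance_add [DecidableEq V] (A B : Multiset (V × V)) (x : V) :
    balance (A + B) x = balance A x + balance B x := by
  simp [balance, indeg, outdeg, Multiset.filter_add]
  ring

lemma balance_walk [DecidableEq V] (x : V) :
    ∀ (L : List (V × V)) (u w : V), IsWalkFrom u w L →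
      balance (↑L) x = (if x = w then 1 else 0) - (if x = u then 1 else 0)
  | [], u, w, h => by
      cases h
      simp [balance, indeg, outdeg]
  | a :: L, u, w, h => by
      obtain ⟨h1, h2⟩ := h
      have ih := balance_walk x L a.2 w h2
      have hc : ((a :: L : List (V × V)) : Multiset (V × V)) = {a} + ↑L := by
        rw [← Multiset.cons_coe, ← Multiset.singleton_add]
      rw [hc, balance_add, ih]
      subst h1
      have hs : balance ({a} : Multiset (V × V)) x
          = (if x = a.2 then 1 else 0) - (if x = a.1 then 1 else 0) := by
        simp only [balance, indeg, outdeg, Multiset.filter_singleton, eq_comm]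
        split_ifs <;> simp
      rw [hs]
      ring

lemma walk_append : ∀ (L M : List (V × V)) (u w x : V),
    IsWalkFrom u w L → IsWalkFrom w x M → IsWalkFrom u x (L ++ M)
  | [], M, u, w, x, h1, h2 => by cases h1; exact h2
  | a :: L, M, u, w, x, h1, h2 => ⟨h1.1, walk_append L M a.2 w x h1.2 h2⟩

theorem maxTrail_closed_or_imbalanced_endpoints [DecidableEq V]
    (A E : Multiset (V × V))
    -- `E` is an Eulerian extension of `G = (V, A)`:
    (hext : IsEulerian (A + E))
    -- `t = (v, w, L)` is a trail in the multigraph `(V, E)` ...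
    (v w : V) (L : List (V × V))
    (hwalk : IsWalkFrom v w L) (htrail : (↑L : Multiset (V × V)) ≤ E)
    -- ... of maximum length among all trails in `(V, E)`:
    (hmax : ∀ (v' w' : V) (L' : List (V × V)), IsWalkFrom v' w' L' →
      (↑L' : Multiset (V × V)) ≤ E → L'.length ≤ L.length) :
    v = w ∨ (0 < balance A v ∧ balance A w < 0) := by
  classical
  obtain ⟨u, L₀, hw₀, hL₀, -⟩ := hext
  have hAE : ∀ x, balance A x = - balance E x := by
    intro x
    have h0 : balance (A + E) x = 0 := by
      rw [← hL₀, balance_walk x L₀ u u hw₀]; simp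
    rw [balance_add] at h0; linarith
  by_cases hvw : v = w
  · exact Or.inl hvw
  right
  have hv : ∀ a ∈ E - (L : Multiset (V × V)), ¬ a.2 = v := by
    intro a ha hav
    have hle : (↑(a :: L) : Multiset (V × V)) ≤ E := by
      rw [← Multiset.cons_coe, ← Multiset.singleton_add]
      calc ({a} : Multiset (V × V)) + ↑L ≤ (E - (L : Multiset (V × V))) + ↑L :=
            add_le_add_left (Multiset.singleton_le.mpr ha) _
        _ = E := tsub_add_cancel_of_le htrail
    have := hmax a.1 w (a :: L) ⟨rfl, by rw [hav]; exact hwalk⟩ hle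
    simp at this
  have hw : ∀ a ∈ E - (L : Multiset (V × V)), ¬ a.1 = w := by
    intro a ha haw
    have hle : (↑(L ++ [a]) : Multiset (V × V)) ≤ E := by
      calc (↑L : Multiset (V × V)) + {a} = {a} + ↑L := add_comm _ _
        _ ≤ (E - (L : Multiset (V × V))) + ↑L := add_le_add_left (Multiset.singleton_le.mpr ha) _
        _ = E := tsub_add_cancel_of_le htrail
    have hwalk' : IsWalkFrom v a.2 (L ++ [a]) :=
      walk_append L [a] v w a.2 hwalk ⟨haw, rfl⟩
    have := hmax v a.2 (L ++ [a]) hwalk' hle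
    simp at this
  have hE : balance E v = balance (↑L) v + balance (E - (L : Multiset (V × V))) v ∧
      balance E w = balance (↑L) w + balance (E - (L : Multiset (V × V))) w := by
    constructor <;>
    · conv_lhs => rw [← tsub_add_cancel_of_le htrail]
      rw [balance_add]; ring
  have hLv : balance (↑L) v = -1 := by
    rw [balance_walk v L v w hwalk]; simp [hvw]
  have hLw : balance (↑L) w = 1 := by
    rw [balance_walk w L v w hwalk]; simp [Ne.symm hvw]
  have hiv : indeg (E - (L : Multiset (V × V))) v = 0 := by
    simp only [indeg, Multiset.card_eq_zero]
    rw [Multiset.filter_eq_nil]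
    exact hv
  have how : outdeg (E - (L : Multiset (V × V))) w = 0 := by
    simp only [outdeg, Multiset.card_eq_zero]
    rw [Multiset.filter_eq_nil]
    exact hw
  have hbv : balance (E - (L : Multiset (V × V))) v ≤ 0 := by
    simp [balance, hiv]
  have hbw : 0 ≤ balance (E - (L : Multiset (V × V))) w := by
    simp [balance, how]
  constructor
  · rw [hAE v, hE.1, hLv]; linarith
  · rw [hAE w, hE.2, hLw]; linarith

end Stmt1
end

section
/- Let G be a directed multigraph with c connected components and let P be a minimal connecting advice for G. Then P contains at most c hints. -/
/-!  STATEMENT 4: A minimal connecting advice for a directed multigraph with `c` connected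
components contains at most `c` hints.  We model the component graph as the complete graph
on the type `C` of connected components; a hint is a walk in it of length at least one that
is a path or a cycle; an advice is a set of pairwise edge-disjoint hints. -/

open SimpleGraph in
/-- Every connected graph on a finite vertex type contains a spanning tree. -/
lemma Stmt4.exists_tree_le {V : Type*} [Fintype V] (G : SimpleGraph V) (hG : G.Connected) :
    ∃ T ≤ G, T.IsTree := by
  classical
  suffices h : ∀ n (G : SimpleGraph V), G.edgeSet.ncard = n → G.Connected →
      ∃ T ≤ G, T.IsTree by
    exact h _ G rfl hG
  intro n
  induction n using Nat.strong_induction_on with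
  | _ n ih =>
    intro G hcard hG
    by_cases hac : G.IsAcyclic
    · exact ⟨G, le_rfl, ⟨hG, hac⟩⟩
    · simp only [IsAcyclic, not_forall, not_not] at hac
      obtain ⟨v, c, hc⟩ := hac
      have hne : c.edges ≠ [] := by
        have h3 := hc.three_le_length
        intro h
        have := c.length_edges
        rw [h] at this
        simp at this
        omega
      obtain ⟨e, he⟩ := List.exists_mem_of_ne_nil _ hne
      induction e with
      | _ a b =>
        have hreach : G.Adj a b ∧ (G \ fromEdgeSet {s(a, b)}).Reachable a b :=
          adj_and_reachable_delete_edges_iff_exists_cycle.mpr ⟨v, c, hc, he⟩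
        set G' : SimpleGraph V := G \ fromEdgeSet {s(a, b)} with hG'
        have hle : G' ≤ G := sdiff_le
        have step : ∀ u w : V, G.Adj u w → G'.Reachable u w := by
          intro u w huw
          by_cases hew : s(u, w) = s(a, b)
          · rw [Sym2.eq_iff] at hew
            rcases hew with ⟨rfl, rfl⟩ | ⟨rfl, rfl⟩
            · exact hreach.2
            · exact hreach.2.symm
          · refine Adj.reachable ?_
            simp only [hG', sdiff_adj, fromEdgeSet_adj, Set.mem_singleton_iff]
            exact ⟨huw, fun h => hew h.1⟩
        have hwalk : ∀ {x y : V} (_ : G.Walk x y), G'.Reachable x y := by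
          intro x y p
          induction p with
          | nil => exact Reachable.refl _
          | cons h q ihq => exact (step _ _ h).trans ihq
        have hG'conn : G'.Connected := by
          have := hG.nonempty
          refine Connected.mk fun x y => ?_
          obtain ⟨p⟩ := hG.preconnected x y
          exact hwalk p
        have hedge : G'.edgeSet = G.edgeSet \ {s(a, b)} := by
          rw [hG', edgeSet_sdiff, edgeSet_fromEdgeSet]
          ext f
          simp only [Set.mem_diff, Set.mem_singleton_iff, Set.mem_setOf_eq]
          constructor
          · rintro ⟨hf, h⟩
            exact ⟨hf, fun hh => h ⟨hh, hh ▸ (Sym2.mk_isDiag_iff.not.mpr hreach.1.ne)⟩⟩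
          · rintro ⟨hf, h⟩
            exact ⟨hf, fun hh => h hh.1⟩
        have hab : s(a, b) ∈ G.edgeSet := hreach.1
        have hlt : G'.edgeSet.ncard < n := by
          rw [← hcard, hedge]
          exact Set.ncard_diff_singleton_lt_of_mem hab G.edgeSet.toFinite
        obtain ⟨T, hT, hTtree⟩ := ih _ hlt G' rfl hG'conn
        exact ⟨T, hT.trans hle, hTtree⟩

namespace Stmt4

/-- The edge set used by a set of hints. -/
def adviceEdges {C : Type*} (P : Set (Σ u : C, Σ v : C, (⊤ : SimpleGraph C).Walk u v)) :
    Set (Sym2 C) :=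
  {e | ∃ h ∈ P, e ∈ h.2.2.edges}

/-- An advice is connecting if its hints together connect every vertex of the
component graph. -/
def IsConnecting {C : Type*} (P : Set (Σ u : C, Σ v : C, (⊤ : SimpleGraph C).Walk u v)) :
    Prop :=
  (SimpleGraph.fromEdgeSet (adviceEdges P)).Connected

theorem minimal_connecting_advice_card {C : Type*} [Fintype C] [Nonempty C]
    (P : Set (Σ u : C, Σ v : C, (⊤ : SimpleGraph C).Walk u v))
    -- every element of `P` is a hint: a path or cycle of length at least one
    (hHint : ∀ h ∈ P, 1 ≤ h.2.2.length ∧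
      (h.2.2.IsPath ∨ (h.1 = h.2.1 ∧ h.2.2.edges.Nodup ∧ h.2.2.support.tail.Nodup)))
    -- the hints are pairwise edge-disjoint
    (hDisj : ∀ h₁ ∈ P, ∀ h₂ ∈ P, h₁ ≠ h₂ → ∀ e ∈ h₁.2.2.edges, e ∉ h₂.2.2.edges)
    -- `P` is connecting ...
    (hConn : IsConnecting P)
    -- ... and minimally so
    (hMin : ∀ Q : Set (Σ u : C, Σ v : C, (⊤ : SimpleGraph C).Walk u v),
      Q ⊂ P → ¬ IsConnecting Q) :
    P.ncard ≤ Fintype.card C := by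
  classical
  obtain ⟨T, hT, hTtree⟩ := Stmt4.exists_tree_le _ hConn
  -- every hint contains an edge of the spanning tree
  have key : ∀ h ∈ P, ∃ e ∈ T.edgeSet, e ∈ h.2.2.edges := by
    intro h hP
    by_contra hcon
    push_neg at hcon
    refine hMin (P \ {h}) (Set.sdiff_singleton_ssubset.mpr hP) ?_
    refine SimpleGraph.Connected.mono ?_ hTtree.isConnected
    intro x y hxy
    have hx : s(x, y) ∈ T.edgeSet := hxy
    have hxy' : (SimpleGraph.fromEdgeSet (adviceEdges P)).Adj x y := hT hxy
    rw [SimpleGraph.fromEdgeSet_adj] at hxy' ⊢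
    obtain ⟨⟨h', hh'P, hh'e⟩, hne⟩ := hxy'
    refine ⟨⟨h', ⟨hh'P, ?_⟩, hh'e⟩, hne⟩
    rintro rfl
    exact hcon _ hx hh'e
  -- choose such an edge for each hint; edge-disjointness makes the choice injective
  choose f hf1 hf2 using key
  set F : (Σ u : C, Σ v : C, (⊤ : SimpleGraph C).Walk u v) → Sym2 C :=
    fun h => if hh : h ∈ P then f h hh else s(Classical.arbitrary C, Classical.arbitrary C) with hF
  have hmem : ∀ h ∈ P, F h ∈ T.edgeSet := by
    intro h hh; simp only [hF, dif_pos hh]; exact hf1 h hh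
  have hinj : Set.InjOn F P := by
    intro h₁ h₁P h₂ h₂P hEq
    by_contra hne
    simp only [hF, dif_pos h₁P, dif_pos h₂P] at hEq
    exact hDisj h₁ h₁P h₂ h₂P hne _ (hf2 h₁ h₁P) (hEq ▸ hf2 h₂ h₂P)
  have hle : P.ncard ≤ T.edgeSet.ncard :=
    Set.ncard_le_ncard_of_injOn F hmem hinj T.edgeSet.toFinite
  have hcount : T.edgeFinset.card + 1 = Fintype.card C := hTtree.card_edgeFinset
  have : T.edgeSet.ncard = T.edgeFinset.card := by
    rw [Set.ncard_eq_toFinset_card', SimpleGraph.edgeFinset]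
  omega

end Stmt4
end

section
/- Let G = (V₁ ⊎ V₂, E) be a bipartite graph in which every vertex of V₁ has degree at most two. If G has a perfect matching, then every connected component of G contains at most one cycle as a subgraph. -/
/-!  STATEMENT 6: Let `G = (V₁ ⊎ V₂, E)` be a bipartite graph in which every vertex of `V₁`
has degree at most two.  If `G` has a perfect matching, then every connected component of
`G` contains at most one cycle as a subgraph (cycles being identified with their edge
sets). -/

open SimpleGraph Finset

/-- If the endpoints of a deleted edge remain reachable, then reachability is preserved
when deleting that edge. -/
private lemma reach_del {V : Type*} {G : SimpleGraph V} {a b : V}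
    (hab : (G \ SimpleGraph.fromEdgeSet {s(a, b)}).Reachable a b) :
    ∀ {x y : V}, G.Reachable x y → (G \ SimpleGraph.fromEdgeSet {s(a, b)}).Reachable x y := by
  intro x y hxy
  obtain ⟨p⟩ := hxy
  induction p with
  | nil => exact Reachable.refl _
  | @cons x z y h p ih =>
    refine Reachable.trans ?_ ih
    by_cases he : s(x, z) = s(a, b)
    · rw [Sym2.eq_iff] at he
      rcases he with ⟨rfl, rfl⟩ | ⟨rfl, rfl⟩
      · exact hab
      · exact hab.symm
    · refine Adj.reachable ?_
      rw [sdiff_adj]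
      refine ⟨h, ?_⟩
      rw [fromEdgeSet_adj]
      rintro ⟨hmem, -⟩
      exact he (Set.mem_singleton_iff.mp hmem)

/-- A set of vertices, pairwise reachable (via a common root `r`) and closed under
adjacency, spans at least `|S| - 1` edges. -/
private lemma card_le_filter_edges {V : Type*} [Fintype V] [DecidableEq V]
    (H : SimpleGraph V) [DecidableRel H.Adj] (S : Set V) [DecidablePred (· ∈ S)]
    (r : V) (hr : r ∈ S)
    (hreach : ∀ v ∈ S, H.Reachable v r)
    (hcl : ∀ a b : V, H.Adj a b → a ∈ S → b ∈ S) :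
    (Finset.univ.filter (· ∈ S)).card ≤
      (H.edgeFinset.filter (fun e => ∀ x ∈ e, x ∈ S)).card + 1 := by
  classical
  have key : ∀ v ∈ S, v ≠ r → ∃ x, H.Adj v x ∧ H.dist x r < H.dist v r := by
    intro v hv hvr
    obtain ⟨p, hp⟩ := (hreach v hv).exists_walk_length_eq_dist
    have hpos : 0 < H.dist v r := (hreach v hv).pos_dist_of_ne hvr
    cases p with
    | nil => simp only [SimpleGraph.Walk.length_nil] at hp; omega
    | @cons _ z _ h q =>
      refine ⟨z, h, ?_⟩
      have hq := H.dist_le q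
      simp only [SimpleGraph.Walk.length_cons] at hp
      omega
  set nxt : V → V := fun v =>
    if h : v ∈ S ∧ v ≠ r then Classical.choose (key v h.1 h.2) else v with hnxt
  have hspec : ∀ v, v ∈ S → v ≠ r → H.Adj v (nxt v) ∧ H.dist (nxt v) r < H.dist v r := by
    intro v hv hvr
    have h : v ∈ S ∧ v ≠ r := ⟨hv, hvr⟩
    simp only [hnxt, dif_pos h]
    exact Classical.choose_spec (key v h.1 h.2)
  have hsub := Finset.card_le_card_of_injOn (f := fun v => s(v, nxt v))
    (s := (Finset.univ.filter (· ∈ S)).erase r)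
    (t := H.edgeFinset.filter (fun e => ∀ x ∈ e, x ∈ S)) ?_ ?_
  · have hrmem : r ∈ Finset.univ.filter (· ∈ S) := by simp [hr]
    have := Finset.card_erase_add_one hrmem
    omega
  · intro v hv
    simp only [Finset.mem_coe, Finset.mem_erase, Finset.mem_filter, Finset.mem_univ, true_and] at hv
    obtain ⟨hadj, -⟩ := hspec v hv.2 hv.1
    simp only [Finset.mem_coe, Finset.mem_filter, SimpleGraph.mem_edgeFinset, SimpleGraph.mem_edgeSet]
    refine ⟨hadj, ?_⟩
    intro x hx
    rw [Sym2.mem_iff] at hx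
    rcases hx with rfl | rfl
    · exact hv.2
    · exact hcl v (nxt v) hadj hv.2
  · intro v hv w hw hvw
    simp only [Finset.mem_coe, Finset.mem_erase, Finset.mem_filter, Finset.mem_univ,
      true_and] at hv hw
    obtain ⟨hadjv, hdv⟩ := hspec v hv.2 hv.1
    obtain ⟨hadjw, hdw⟩ := hspec w hw.2 hw.1
    rw [Sym2.eq_iff] at hvw
    rcases hvw with ⟨rfl, -⟩ | ⟨h1, h2⟩
    · rfl
    · exfalso
      rw [h2] at hdv
      rw [← h1] at hdw
      omega

theorem at_most_one_cycle_per_component {V : Type*} [Fintype V] [DecidableEq V]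
    (G : SimpleGraph V) [DecidableRel G.Adj]
    (V1 V2 : Set V) (hdisj : Disjoint V1 V2) (hunion : V1 ∪ V2 = Set.univ)
    (hbip : ∀ u v, G.Adj u v → (u ∈ V1 ∧ v ∈ V2) ∨ (u ∈ V2 ∧ v ∈ V1))
    (hdeg : ∀ v ∈ V1, G.degree v ≤ 2)
    (hpm : ∃ M : G.Subgraph, M.IsPerfectMatching) :
    ∀ (u w : V) (c1 : G.Walk u u) (c2 : G.Walk w w),
      c1.IsCycle → c2.IsCycle → G.Reachable u w →
      c1.edges.toFinset = c2.edges.toFinset := by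
  classical
  obtain ⟨M, hM⟩ := hpm
  -- basic facts about the bipartition
  have hv12 : ∀ v : V, v ∈ V1 ↔ v ∉ V2 := by
    intro v
    constructor
    · intro h1 h2
      exact Set.disjoint_left.mp hdisj h1 h2
    · intro h2
      have : v ∈ V1 ∪ V2 := hunion ▸ Set.mem_univ v
      rcases this with h | h
      · exact h
      · exact absurd h h2
  -- the matching partner function
  have hpart : ∀ v : V, ∃! x, M.Adj v x := fun v => hM.1 (hM.2 v)
  set pt : V → V := fun v => (hpart v).choose with hptdef
  have hptadj : ∀ v, M.Adj v (pt v) := fun v => (hpart v).choose_spec.1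
  have hptuniq : ∀ v y, M.Adj v y → y = pt v := fun v y h => (hpart v).choose_spec.2 y h
  have hptG : ∀ v, G.Adj v (pt v) := fun v => M.adj_sub (hptadj v)
  have hptinv : ∀ v, pt (pt v) = v := fun v => (hptuniq (pt v) v (hptadj v).symm).symm
  -- The key symmetric claim
  have key : ∀ (u w : V) (c1 : G.Walk u u) (c2 : G.Walk w w), c1.IsCycle → c2.IsCycle →
      G.Reachable u w → ∀ a1 b1 : V, s(a1, b1) ∈ c1.edges → s(a1, b1) ∉ c2.edges → False := by
    intro u w c1 c2 hc1 hc2 huw a1 b1 he1 hne1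
    set S : Set V := (G.connectedComponentMk u).supp with hSdef'
    have hSdef : ∀ x, x ∈ S ↔ G.Reachable x u := by
      intro x
      rw [hSdef', SimpleGraph.ConnectedComponent.mem_supp_iff, SimpleGraph.ConnectedComponent.eq]
    have hclG : ∀ a b : V, G.Adj a b → a ∈ S → b ∈ S := by
      intro a b hab ha
      rw [hSdef] at ha ⊢
      exact hab.symm.reachable.trans ha
    have huS : u ∈ S := (hSdef u).mpr (Reachable.refl u)
    have hwS : w ∈ S := (hSdef w).mpr huw.symm
    have hsupp : ∀ {a b : V} (p : G.Walk a b), a ∈ S → ∀ x ∈ p.support, x ∈ S := by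
      intro a b p ha x hx
      rw [hSdef] at ha ⊢
      exact ((p.takeUntil x hx).reachable).symm.trans ha
    -- Finsets
    set FS : Finset V := Finset.univ.filter (· ∈ S) with hFS
    set A : Finset V := Finset.univ.filter (fun v => v ∈ S ∧ v ∈ V1) with hA
    set B : Finset V := Finset.univ.filter (fun v => v ∈ S ∧ v ∈ V2) with hB
    set ES : Finset (Sym2 V) := G.edgeFinset.filter (fun e => ∀ x ∈ e, x ∈ S) with hES
    -- |A| = |B| via the matching
    have hAB : A.card = B.card := by
      refine Finset.card_bij' (fun v _ => pt v) (fun v _ => pt v) ?_ ?_ ?_ ?_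
      · intro a ha
        simp only [hA, Finset.mem_filter, Finset.mem_univ, true_and] at ha
        simp only [hB, Finset.mem_filter, Finset.mem_univ, true_and]
        refine ⟨hclG a (pt a) (hptG a) ha.1, ?_⟩
        rcases hbip a (pt a) (hptG a) with ⟨-, h2⟩ | ⟨h2, -⟩
        · exact h2
        · exact absurd h2 ((hv12 a).mp ha.2)
      · intro b hb
        simp only [hB, Finset.mem_filter, Finset.mem_univ, true_and] at hb
        simp only [hA, Finset.mem_filter, Finset.mem_univ, true_and]
        refine ⟨hclG b (pt b) (hptG b) hb.1, ?_⟩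
        rcases hbip b (pt b) (hptG b) with ⟨h1, -⟩ | ⟨-, h2⟩
        · exact absurd hb.2 (((hv12 b).mp h1))
        · exact h2
      · intro a _; exact hptinv a
      · intro b _; exact hptinv b
    -- |FS| = |A| + |B|
    have hFSAB : FS.card = A.card + B.card := by
      have h1 : A = FS.filter (· ∈ V1) := by
        ext v; simp [hA, hFS, Finset.filter_filter, and_comm]
      have h2 : B = FS.filter (fun v => v ∉ V1) := by
        ext v
        simp only [hB, hFS, Finset.mem_filter, Finset.mem_univ, true_and]
        constructor
        · rintro ⟨hv, h2⟩; exact ⟨hv, fun h1 => (hv12 v).mp h1 h2⟩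
        · rintro ⟨hv, h1⟩
          refine ⟨hv, ?_⟩
          by_contra h2
          exact h1 ((hv12 v).mpr h2)
      rw [h1, h2, Finset.card_filter_add_card_filter_not]
    -- ES as a union of incidence sets over A
    have hESbi : ES = A.biUnion (fun v => G.incidenceFinset v) := by
      ext e
      induction e with
      | _ x y =>
        simp only [hES, Finset.mem_filter, SimpleGraph.mem_edgeFinset, SimpleGraph.mem_edgeSet,
          Finset.mem_biUnion, hA, Finset.mem_univ, true_and,
          SimpleGraph.mem_incidenceFinset, SimpleGraph.mem_incidenceSet]
        constructor
        · rintro ⟨hadj, hall⟩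
          have hx : x ∈ S := hall x (Sym2.mem_mk_left x y)
          have hy : y ∈ S := hall y (Sym2.mem_mk_right x y)
          rcases hbip x y hadj with ⟨h1, -⟩ | ⟨-, h1⟩
          · exact ⟨x, ⟨hx, h1⟩, hadj, Sym2.mem_mk_left x y⟩
          · exact ⟨y, ⟨hy, h1⟩, hadj, Sym2.mem_mk_right x y⟩
        · rintro ⟨v, ⟨hvS, -⟩, hadj, hv⟩
          refine ⟨hadj, ?_⟩
          intro z hz
          rw [Sym2.mem_iff] at hz hv
          have hxy : x ∈ S ∧ y ∈ S := by
            rcases hv with rfl | rfl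
            · exact ⟨hvS, hclG _ _ hadj hvS⟩
            · exact ⟨hclG _ _ hadj.symm hvS, hvS⟩
          rcases hz with rfl | rfl
          · exact hxy.1
          · exact hxy.2
    -- |ES| ≤ 2 |A|
    have hEScard : ES.card ≤ 2 * A.card := by
      rw [hESbi, Finset.card_biUnion]
      · calc ∑ v ∈ A, (G.incidenceFinset v).card
            = ∑ v ∈ A, G.degree v := by
              refine Finset.sum_congr rfl fun v _ => ?_
              simp [SimpleGraph.card_incidenceFinset_eq_degree]
          _ ≤ ∑ _v ∈ A, 2 := by
              refine Finset.sum_le_sum fun v hv => ?_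
              simp only [hA, Finset.mem_filter] at hv
              exact hdeg v hv.2.2
          _ = 2 * A.card := by rw [Finset.sum_const, smul_eq_mul, mul_comm]
      · intro x hx y hy hxy
        simp only [Finset.mem_coe, hA, Finset.mem_filter, Finset.mem_univ, true_and] at hx hy
        simp only [Function.onFun]; rw [Finset.disjoint_left]
        intro e hex hey
        rw [SimpleGraph.mem_incidenceFinset] at hex hey
        obtain ⟨hee, hxe⟩ := hex
        obtain ⟨-, hye⟩ := hey
        have hexy : e = s(x, y) := (Sym2.mem_and_mem_iff hxy).mp ⟨hxe, hye⟩
        rw [hexy, SimpleGraph.mem_edgeSet] at hee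
        rcases hbip x y hee with ⟨-, h⟩ | ⟨h, -⟩
        · exact (hv12 y).mp hy.2 h
        · exact (hv12 x).mp hx.2 h
    -- now destruct c2 to get a concrete edge
    cases c2 with
    | nil => exact hc2.ne_nil rfl
    | @cons _ x2 _ hadj2 q2 =>
      have he2 : s(w, x2) ∈ (SimpleGraph.Walk.cons hadj2 q2).edges := by
        simp [SimpleGraph.Walk.edges_cons]
      -- delete the edge e1 = s(a1, b1)
      set G1 : SimpleGraph V := G \ SimpleGraph.fromEdgeSet {s(a1, b1)} with hG1def
      have hG1 : G1.Reachable a1 b1 :=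
        (SimpleGraph.adj_and_reachable_delete_edges_iff_exists_cycle.mpr ⟨u, c1, hc1, he1⟩).2
      have step1 : ∀ {x y : V}, G.Reachable x y → G1.Reachable x y := fun h => reach_del hG1 h
      -- transfer c2 to G1
      have htrans : ∀ e ∈ (SimpleGraph.Walk.cons hadj2 q2).edges, e ∈ G1.edgeSet := by
        intro e he
        simp only [hG1def, SimpleGraph.edgeSet_sdiff, SimpleGraph.edgeSet_fromEdgeSet,
          SimpleGraph.edgeSet_sdiff_sdiff_isDiag, Set.mem_diff, Set.mem_singleton_iff]
        exact ⟨(SimpleGraph.Walk.cons hadj2 q2).edges_subset_edgeSet he,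
          fun h' => hne1 (h' ▸ he)⟩
      set c2' := (SimpleGraph.Walk.cons hadj2 q2).transfer G1 htrans with hc2'def
      have hc2' : c2'.IsCycle := hc2.transfer _
      have he2' : s(w, x2) ∈ c2'.edges := by
        rw [hc2'def, SimpleGraph.Walk.edges_transfer]
        exact he2
      -- delete the edge e2 = s(w, x2)
      set H : SimpleGraph V := G1 \ SimpleGraph.fromEdgeSet {s(w, x2)} with hHdef
      have hG2 : H.Reachable w x2 :=
        (SimpleGraph.adj_and_reachable_delete_edges_iff_exists_cycle.mpr ⟨w, c2', hc2', he2'⟩).2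
      have step2 : ∀ {x y : V}, G1.Reachable x y → H.Reachable x y := fun h => reach_del hG2 h
      have hHle : ∀ a b : V, H.Adj a b → G.Adj a b := by
        intro a b h
        rw [hHdef, sdiff_adj] at h
        have h1 := h.1
        rw [hG1def, sdiff_adj] at h1
        exact h1.1
      have hreachH : ∀ v ∈ S, H.Reachable v u := fun v hv => step2 (step1 ((hSdef v).mp hv))
      have hclH : ∀ a b : V, H.Adj a b → a ∈ S → b ∈ S :=
        fun a b h ha => hclG a b (hHle a b h) ha
      have hlow := card_le_filter_edges H S u huS hreachH hclH
      rw [← hFS] at hlow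
      set EH : Finset (Sym2 V) := H.edgeFinset.filter (fun e => ∀ x ∈ e, x ∈ S) with hEH
      have hlow' : FS.card ≤ EH.card + 1 := by
        convert hlow using 4
        ext e
        simp [hEH, SimpleGraph.mem_edgeFinset]
      -- the two deleted edges lie inside the component
      have ha1S : a1 ∈ S := hsupp c1 huS a1 (c1.fst_mem_support_of_mem_edges he1)
      have hb1S : b1 ∈ S := hsupp c1 huS b1 (c1.snd_mem_support_of_mem_edges he1)
      have hx2S : x2 ∈ S := hclG w x2 hadj2 hwS
      have hadj1 : G.Adj a1 b1 := c1.adj_of_mem_edges he1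
      have he1ES : s(a1, b1) ∈ ES := by
        simp only [hES, Finset.mem_filter, SimpleGraph.mem_edgeFinset, SimpleGraph.mem_edgeSet]
        refine ⟨hadj1, ?_⟩
        intro x hx
        rw [Sym2.mem_iff] at hx
        rcases hx with rfl | rfl
        · exact ha1S
        · exact hb1S
      have he2ES : s(w, x2) ∈ ES := by
        simp only [hES, Finset.mem_filter, SimpleGraph.mem_edgeFinset, SimpleGraph.mem_edgeSet]
        refine ⟨hadj2, ?_⟩
        intro x hx
        rw [Sym2.mem_iff] at hx
        rcases hx with rfl | rfl
        · exact hwS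
        · exact hx2S
      -- neither deleted edge lies in EH
      have he1H : s(a1, b1) ∉ EH := by
        simp only [hEH, Finset.mem_filter, SimpleGraph.mem_edgeFinset, SimpleGraph.mem_edgeSet]
        rintro ⟨hadj, -⟩
        rw [hHdef, sdiff_adj, hG1def, sdiff_adj] at hadj
        exact hadj.1.2 ((SimpleGraph.fromEdgeSet_adj _).mpr ⟨rfl, hadj1.ne⟩)
      have he2H : s(w, x2) ∉ EH := by
        simp only [hEH, Finset.mem_filter, SimpleGraph.mem_edgeFinset, SimpleGraph.mem_edgeSet]
        rintro ⟨hadj, -⟩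
        rw [hHdef, sdiff_adj] at hadj
        exact hadj.2 ((SimpleGraph.fromEdgeSet_adj _).mpr ⟨rfl, hadj2.ne⟩)
      have hne12 : s(a1, b1) ≠ s(w, x2) := fun h => hne1 (h ▸ he2)
      -- EH ∪ {e1, e2} ⊆ ES
      have hsub2 : insert s(a1, b1) (insert s(w, x2) EH) ⊆ ES := by
        intro e he
        rcases Finset.mem_insert.mp he with rfl | he
        · exact he1ES
        rcases Finset.mem_insert.mp he with rfl | he
        · exact he2ES
        simp only [hEH, Finset.mem_filter, SimpleGraph.mem_edgeFinset] at he
        simp only [hES, Finset.mem_filter, SimpleGraph.mem_edgeFinset]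
        refine ⟨?_, he.2⟩
        have hle : H ≤ G := by
          rw [hHdef, hG1def]
          exact le_trans sdiff_le sdiff_le
        exact SimpleGraph.edgeSet_mono hle he.1
      have hcard2 : EH.card + 2 ≤ ES.card := by
        have hc := Finset.card_le_card hsub2
        rw [Finset.card_insert_of_notMem, Finset.card_insert_of_notMem he2H] at hc
        · omega
        · rw [Finset.mem_insert]
          rintro (h | h)
          · exact hne12 h
          · exact he1H h
      omega
  intro u w c1 c2 hc1 hc2 huw
  ext e
  simp only [List.mem_toFinset]
  constructor
  · intro he
    by_contra hne
    revert he hne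
    induction e using Sym2.ind with
    | _ a b => exact fun he hne => (key u w c1 c2 hc1 hc2 huw a b he hne).elim
  · intro he
    by_contra hne
    revert he hne
    induction e using Sym2.ind with
    | _ a b => exact fun he hne => (key w u c2 c1 hc2 hc1 huw.symm a b he hne).elim
end

section
/- A clause-wise reduction of 3SAT to Conjoining Bipartite Matching is correct: for a boolean formula φ in conjunctive normal form over variables x₁, …, x_n with clauses c₁, …, c_m, build for each variable x_i an undirected cycle with 4m vertices v_i^1, …, v_i^{4m}; define the cell C_j for clause c_j to contain v_i^{4j−1} whenever x_i occurs in c_j, v_i^{4j−2} when x_i occurs positively in c_j, and v_i^{4j} when x_i occurs negatively; let C₀ contain all remaining vertices, and let the join set be {{0, j} : 1 ≤ j ≤ m}. Then φ is satisfiable if and only if the union of cycles has a perfect matching M such that for every join {0, j} some edge of M has one endpoint in C₀ and one in C_j. -/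
/-!  STATEMENT 16: Correctness of the clause-wise reduction of 3SAT to Conjoining Bipartite
Matching.  For a CNF formula over variables `Fin n` with clauses `Fin m` (a clause is a set
of literals `(i, sign)`), build for each variable `i` a cycle on vertices
`(i, p)`, `p ∈ ZMod (4m)` (edges `{(i,p), (i,p+1)}`, matching the 1-indexed vertices
`v_i^1, …, v_i^{4m}` of the paper).  The cell of clause `j` (0-indexed; the paper's clause
`j+1`) contains `(i, 4j+3)` whenever `x_i` occurs in the clause, `(i, 4j+2)` when it occurs
positively and `(i, 4j+4)` when it occurs negatively; `C₀` consists of all remaining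
vertices.  Then `φ` is satisfiable iff the union of cycles has a perfect matching `M` such
that for every join `{0, j}` some edge of `M` has one endpoint in `C_j` and one in `C₀`. -/

namespace Stmt16

/-- The cell `C_j` of clause `j` (clauses are sets of literals; `(i, true)` is the
positive literal `x_i`, `(i, false)` the negative literal `¬x_i`). -/
def cell (n m : ℕ) (clauses : Fin m → Finset (Fin n × Bool)) (j : Fin m) :
    Set (Fin n × ZMod (4 * m)) :=
  {x | (x.2 = ((4 * (j : ℕ) + 3 : ℕ) : ZMod (4 * m)) ∧
          ((x.1, true) ∈ clauses j ∨ (x.1, false) ∈ clauses j)) ∨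
       (x.2 = ((4 * (j : ℕ) + 2 : ℕ) : ZMod (4 * m)) ∧ (x.1, true) ∈ clauses j) ∨
       (x.2 = ((4 * (j : ℕ) + 4 : ℕ) : ZMod (4 * m)) ∧ (x.1, false) ∈ clauses j)}

/-- The `p`-th edge of the cycle of variable `i`. -/
def E {n m : ℕ} (i : Fin n) (p : ZMod (4 * m)) : Sym2 (Fin n × ZMod (4 * m)) :=
  s((i, p), (i, p + 1))

section helpers

variable {n m : ℕ}

lemma one_ne_zero' (hm : 0 < m) : (1 : ZMod (4 * m)) ≠ 0 := by
  haveI : NeZero (4 * m) := ⟨by omega⟩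
  have : ((1 : ℕ) : ZMod (4 * m)) ≠ 0 := by
    rw [Ne, ZMod.natCast_eq_zero_iff]
    intro h; have := Nat.le_of_dvd one_pos h; omega
  simpa using this

lemma two_ne_zero' (hm : 0 < m) : (2 : ZMod (4 * m)) ≠ 0 := by
  haveI : NeZero (4 * m) := ⟨by omega⟩
  have : ((2 : ℕ) : ZMod (4 * m)) ≠ 0 := by
    rw [Ne, ZMod.natCast_eq_zero_iff]
    intro h; have := Nat.le_of_dvd (by omega) h; omega
  simpa using this

lemma E_eq_E (hm : 0 < m) {i i' : Fin n} {p q : ZMod (4 * m)} :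
    E i p = E i' q ↔ i = i' ∧ p = q := by
  constructor
  · intro h
    rw [E, E, Sym2.eq_iff] at h
    rcases h with ⟨h1, h2⟩ | ⟨h1, h2⟩
    · exact ⟨congrArg Prod.fst h1, congrArg Prod.snd h1⟩
    · have hp : p = q + 1 := congrArg Prod.snd h1
      have hq : p + 1 = q := congrArg Prod.snd h2
      exfalso
      have key : q + 2 = q := by
        calc q + 2 = (q + 1) + 1 := by ring
        _ = p + 1 := by rw [hp]
        _ = q := hq
      exact two_ne_zero' hm (add_left_cancel (key.trans (add_zero q).symm))
  · rintro ⟨rfl, rfl⟩; rfl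

lemma mem_E {i : Fin n} {p : ZMod (4 * m)} {x : Fin n × ZMod (4 * m)} :
    x ∈ E i p ↔ x = (i, p) ∨ x = (i, p + 1) := Sym2.mem_iff

lemma val_one'' (hm : 0 < m) : (1 : ZMod (4 * m)).val = 1 :=
  haveI : Fact (1 < 4 * m) := ⟨by omega⟩
  ZMod.val_one (4 * m)

lemma val_add_one_par (hm : 0 < m) (p : ZMod (4 * m)) :
    (p + 1).val % 2 = (p.val + 1) % 2 := by
  haveI : NeZero (4 * m) := ⟨by omega⟩
  rw [ZMod.val_add, val_one'' hm, Nat.mod_mod_of_dvd _ (by omega : (2:ℕ) ∣ 4 * m)]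

lemma val_natCast_par (hm : 0 < m) (t : ℕ) :
    ((t : ZMod (4 * m))).val % 2 = t % 2 := by
  haveI : NeZero (4 * m) := ⟨by omega⟩
  rw [ZMod.val_natCast, Nat.mod_mod_of_dvd _ (by omega : (2:ℕ) ∣ 4 * m)]

variable (hm : 0 < m) {M : Set (Sym2 (Fin n × ZMod (4 * m)))}
  (hcyc : ∀ e ∈ M, ∃ (i : Fin n) (p : ZMod (4 * m)), e = s((i, p), (i, p + 1)))
  (hpm : ∀ x : Fin n × ZMod (4 * m), ∃! e, e ∈ M ∧ x ∈ e)

include hm hpm in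
lemma noAdj {i : Fin n} {p : ZMod (4 * m)} (h1 : E i p ∈ M) (h2 : E i (p + 1) ∈ M) :
    False := by
  have hne : E i p ≠ E i (p + 1) := by
    rw [Ne, E_eq_E hm]
    rintro ⟨-, h⟩
    exact one_ne_zero' hm (left_eq_add.mp h)
  obtain ⟨e, -, hu⟩ := hpm (i, p + 1)
  have e1 : E i p = e := (hu _ ⟨h1, mem_E.mpr (Or.inr rfl)⟩).symm.symm
  have e2 : E i (p + 1) = e := (hu _ ⟨h2, mem_E.mpr (Or.inl rfl)⟩).symm.symm
  exact hne (e1.trans e2.symm)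

include hm hcyc hpm in
lemma step {i : Fin n} {p : ZMod (4 * m)} (h : E i p ∈ M) : E i (p + 2) ∈ M := by
  obtain ⟨e, ⟨heM, hex⟩, hu⟩ := hpm (i, p + 2)
  obtain ⟨i', q, rfl⟩ := hcyc e heM
  have hex' : (i, p + 2) ∈ E i' q := hex
  rw [mem_E] at hex'
  rcases hex' with h1 | h1
  · have hi : i = i' := congrArg Prod.fst h1
    have hq : p + 2 = q := congrArg Prod.snd h1
    subst hi
    rw [← hq] at heM
    exact heM
  · have hi : i = i' := congrArg Prod.fst h1
    have hq : p + 2 = q + 1 := congrArg Prod.snd h1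
    subst hi
    have : q = p + 1 := by
      have := add_right_cancel (b := (1 : ZMod (4 * m)))
        (a := p + 1) (c := q) (by rw [← hq]; ring)
      exact this.symm
    subst this
    exact absurd (noAdj hm hpm h heM) id

include hm hcyc hpm in
lemma iter {i : Fin n} {p : ZMod (4 * m)} (k : ℕ) (h : E i p ∈ M) :
    E i (p + ((2 * k : ℕ) : ZMod (4 * m))) ∈ M := by
  induction k with
  | zero => simpa using h
  | succ k ih =>
      have : p + ((2 * (k + 1) : ℕ) : ZMod (4 * m)) =
          (p + ((2 * k : ℕ) : ZMod (4 * m))) + 2 := by push_cast; ring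
      rw [this]
      exact step hm hcyc hpm ih

include hm hcyc hpm in
lemma transfer {i : Fin n} {p q : ZMod (4 * m)} (hpar : p.val % 2 = q.val % 2)
    (h : E i p ∈ M) : E i q ∈ M := by
  haveI : NeZero (4 * m) := ⟨by omega⟩
  have hplt := ZMod.val_lt p
  have hqlt := ZMod.val_lt q
  set k := (q.val + 4 * m - p.val) / 2 with hk
  have h2k : 2 * k = q.val + 4 * m - p.val := by omega
  have heq : p + ((2 * k : ℕ) : ZMod (4 * m)) = q := by
    rw [h2k, Nat.cast_sub (by omega), Nat.cast_add, ZMod.natCast_zmod_val,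
      ZMod.natCast_zmod_val]
    have : ((4 * m : ℕ) : ZMod (4 * m)) = 0 := ZMod.natCast_self _
    rw [this]
    ring
  rw [← heq]
  exact iter hm hcyc hpm k h

include hm hcyc hpm in
lemma oppo {i : Fin n} {p q : ZMod (4 * m)} (hpar : p.val % 2 ≠ q.val % 2)
    (h : E i p ∈ M) (h' : E i q ∈ M) : False := by
  have hp1 : p.val % 2 = (q + 1).val % 2 := by
    rw [val_add_one_par hm]
    omega
  exact noAdj hm hpm h' (transfer hm hcyc hpm hp1 h)

lemma not_in_cells (hm : 0 < m) (clauses : Fin m → Finset (Fin n × Bool))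
    (i : Fin n) (t : ℕ) (ht : t % 4 = 1) :
    (i, (t : ZMod (4 * m))) ∉ ⋃ j' : Fin m, cell n m clauses j' := by
  intro h
  obtain ⟨j', hj⟩ := Set.mem_iUnion.mp h
  simp only [cell, Set.mem_setOf_eq] at hj
  have key : ∀ s : ℕ, s % 4 ≠ 1 → ¬ ((t : ZMod (4 * m)) = (s : ZMod (4 * m))) := by
    intro s hs hEq
    rw [ZMod.natCast_eq_natCast_iff'] at hEq
    have h1 : t % (4 * m) % 4 = t % 4 := Nat.mod_mod_of_dvd _ ⟨m, rfl⟩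
    have h2 : s % (4 * m) % 4 = s % 4 := Nat.mod_mod_of_dvd _ ⟨m, rfl⟩
    omega
  rcases hj with ⟨h1, -⟩ | ⟨h1, -⟩ | ⟨h1, -⟩
  · exact key _ (by omega) h1
  · exact key _ (by omega) h1
  · exact key _ (by omega) h1

end helpers

theorem threeSat_iff_conjoining_matching (n m : ℕ) (hm : 0 < m)
    (clauses : Fin m → Finset (Fin n × Bool)) :
    -- `φ` is satisfiable
    (∃ ν : Fin n → Bool, ∀ j : Fin m, ∃ lit ∈ clauses j, ν lit.1 = lit.2) ↔
    -- the union of the variable cycles has a perfect conjoining matching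
    (∃ M : Set (Sym2 (Fin n × ZMod (4 * m))),
      -- `M` uses only cycle edges
      (∀ e ∈ M, ∃ (i : Fin n) (p : ZMod (4 * m)), e = s((i, p), (i, p + 1))) ∧
      -- `M` is a perfect matching
      (∀ x : Fin n × ZMod (4 * m), ∃! e, e ∈ M ∧ x ∈ e) ∧
      -- every join `{0, j}` is satisfied
      (∀ j : Fin m, ∃ e ∈ M, ∃ a b : Fin n × ZMod (4 * m),
        e = s(a, b) ∧ a ∈ cell n m clauses j ∧
        b ∉ ⋃ j' : Fin m, cell n m clauses j')) := by
  haveI : NeZero (4 * m) := ⟨by omega⟩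
  constructor
  · rintro ⟨ν, hsat⟩
    refine ⟨{e | ∃ (i : Fin n) (p : ZMod (4 * m)),
        e = E i p ∧ (p.val % 2 = 1 ↔ ν i = true)}, ?_, ?_, ?_⟩
    · rintro e ⟨i, p, rfl, -⟩; exact ⟨i, p, rfl⟩
    · rintro ⟨i, p⟩
      by_cases hc : p.val % 2 = 1 ↔ ν i = true
      · refine ⟨E i p, ⟨⟨i, p, rfl, hc⟩, mem_E.mpr (Or.inl rfl)⟩, ?_⟩
        rintro e ⟨⟨i', q, rfl, hq⟩, hx⟩
        rw [mem_E] at hx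
        rcases hx with h1 | h1
        · have hi : i' = i := (congrArg Prod.fst h1).symm
          have hp : q = p := (congrArg Prod.snd h1).symm
          subst hi; subst hp; rfl
        · exfalso
          have hi : i' = i := (congrArg Prod.fst h1).symm
          have hp : p = q + 1 := congrArg Prod.snd h1
          rw [hi] at hq
          have hpar : p.val % 2 = (q.val + 1) % 2 := by
            rw [hp]; exact val_add_one_par hm q
          rcases Bool.dichotomy (ν i) with hb | hb <;>
            rw [hb] at hq hc <;> simp at hq hc <;> omega
      · have hq1 : (p - 1) + 1 = p := by ring
        have hpar : p.val % 2 = ((p - 1).val + 1) % 2 := by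
          conv_lhs => rw [← hq1]
          exact val_add_one_par hm (p - 1)
        have hq : (p - 1).val % 2 = 1 ↔ ν i = true := by
          rcases Bool.dichotomy (ν i) with hb | hb <;>
            rw [hb] at hc ⊢ <;> simp at hc ⊢ <;> omega
        refine ⟨E i (p - 1), ⟨⟨i, p - 1, rfl, hq⟩, mem_E.mpr (Or.inr (by rw [hq1]))⟩, ?_⟩
        rintro e ⟨⟨i', q', rfl, hq'⟩, hx⟩
        rw [mem_E] at hx
        rcases hx with h1 | h1
        · exfalso
          have hi : i' = i := (congrArg Prod.fst h1).symm
          have hp : p = q' := congrArg Prod.snd h1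
          subst hi; subst hp
          exact hc hq'
        · have hi : i' = i := (congrArg Prod.fst h1).symm
          have hp : p = q' + 1 := congrArg Prod.snd h1
          subst hi
          have : q' = p - 1 := by rw [hp]; ring
          subst this; rfl
    · intro j
      obtain ⟨⟨i, sg⟩, hlit, hνs⟩ := hsat j
      cases sg with
      | true =>
        refine ⟨E i ((4 * (j : ℕ) + 1 : ℕ) : ZMod (4 * m)), ⟨i, _, rfl, ?_⟩,
          (i, ((4 * (j : ℕ) + 2 : ℕ) : ZMod (4 * m))),
          (i, ((4 * (j : ℕ) + 1 : ℕ) : ZMod (4 * m))), ?_, ?_, ?_⟩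
        · rw [val_natCast_par hm]; simp [hνs]; omega
        · have hc12 : ((4 * (j : ℕ) + 1 : ℕ) : ZMod (4 * m)) + 1 =
              ((4 * (j : ℕ) + 2 : ℕ) : ZMod (4 * m)) := by push_cast; ring
          rw [E, hc12]; exact Sym2.eq_swap
        · exact Or.inr (Or.inl ⟨rfl, hlit⟩)
        · exact not_in_cells hm clauses i _ (by omega)
      | false =>
        refine ⟨E i ((4 * (j : ℕ) + 4 : ℕ) : ZMod (4 * m)), ⟨i, _, rfl, ?_⟩,
          (i, ((4 * (j : ℕ) + 4 : ℕ) : ZMod (4 * m))),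
          (i, ((4 * (j : ℕ) + 5 : ℕ) : ZMod (4 * m))), ?_, ?_, ?_⟩
        · rw [val_natCast_par hm]; simp [hνs]; omega
        · have hc45 : ((4 * (j : ℕ) + 4 : ℕ) : ZMod (4 * m)) + 1 =
              ((4 * (j : ℕ) + 5 : ℕ) : ZMod (4 * m)) := by push_cast; ring
          rw [E, hc45]
        · exact Or.inr (Or.inr ⟨rfl, hlit⟩)
        · exact not_in_cells hm clauses i _ (by omega)
  · rintro ⟨M, hcyc, hpm, hjoin⟩
    classical
    set ν : Fin n → Bool := fun i => decide (E i 1 ∈ M) with hν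
    have hνiff : ∀ i : Fin n, ν i = true ↔ E i 1 ∈ M := by
      intro i; simp [hν]
    have todd : ∀ (i : Fin n) (t : ℕ), t % 2 = 1 →
        E i ((t : ℕ) : ZMod (4 * m)) ∈ M → ν i = true := by
      intro i t ht h
      rw [hνiff]
      refine transfer hm hcyc hpm ?_ h
      rw [val_natCast_par hm, val_one'' hm, ht]
    have teven : ∀ (i : Fin n) (t : ℕ), t % 2 = 0 →
        E i ((t : ℕ) : ZMod (4 * m)) ∈ M → ν i = false := by
      intro i t ht h
      rcases Bool.dichotomy (ν i) with hb | hb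
      · exact hb
      · exfalso
        rw [hνiff] at hb
        refine oppo hm hcyc hpm ?_ h hb
        rw [val_natCast_par hm, val_one'' hm, ht]
        omega
    refine ⟨ν, ?_⟩
    intro j
    obtain ⟨e, heM, a, b, hab, ha, hb⟩ := hjoin j
    obtain ⟨i, p, rfl⟩ := hcyc e heM
    change E i p ∈ M at heM
    have hab' : E i p = s(a, b) := hab
    rw [E, Sym2.eq_iff] at hab'
    have hc23 : ((4 * (j : ℕ) + 2 : ℕ) : ZMod (4 * m)) + 1 =
        ((4 * (j : ℕ) + 3 : ℕ) : ZMod (4 * m)) := by push_cast; ring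
    have hc34 : ((4 * (j : ℕ) + 3 : ℕ) : ZMod (4 * m)) + 1 =
        ((4 * (j : ℕ) + 4 : ℕ) : ZMod (4 * m)) := by push_cast; ring
    have hc12 : ((4 * (j : ℕ) + 1 : ℕ) : ZMod (4 * m)) + 1 =
        ((4 * (j : ℕ) + 2 : ℕ) : ZMod (4 * m)) := by push_cast; ring
    rcases hab' with ⟨rfl, rfl⟩ | ⟨rfl, rfl⟩
    · -- a = (i, p), b = (i, p + 1)
      simp only [cell, Set.mem_setOf_eq] at ha
      rcases ha with ⟨hp3, hocc⟩ | ⟨hp2, hpos⟩ | ⟨hp4, hneg⟩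
      · -- p = 4j+3
        have hkey : (i, true) ∈ clauses j := by
          rcases hocc with h | h
          · exact h
          · exfalso
            exact hb (Set.mem_iUnion.mpr ⟨j, Or.inr (Or.inr
              ⟨by show p + 1 = _; rw [hp3, hc34], h⟩)⟩)
        rw [hp3] at heM
        exact ⟨(i, true), hkey, todd i (4 * (j : ℕ) + 3) (by omega) heM⟩
      · -- p = 4j+2 : b = (i, 4j+3) would be in the cell
        exfalso
        exact hb (Set.mem_iUnion.mpr ⟨j, Or.inl
          ⟨by show p + 1 = _; rw [hp2, hc23], Or.inl hpos⟩⟩)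
      · -- p = 4j+4
        rw [hp4] at heM
        exact ⟨(i, false), hneg, teven i (4 * (j : ℕ) + 4) (by omega) heM⟩
    · -- a = (i, p + 1), b = (i, p)
      simp only [cell, Set.mem_setOf_eq] at ha
      rcases ha with ⟨hp3, hocc⟩ | ⟨hp2, hpos⟩ | ⟨hp4, hneg⟩
      · -- p + 1 = 4j+3, so p = 4j+2
        have hp' : p = ((4 * (j : ℕ) + 2 : ℕ) : ZMod (4 * m)) :=
          add_right_cancel ((show p + 1 = _ from hp3).trans hc23.symm)
        have hkey : (i, false) ∈ clauses j := by
          rcases hocc with h | h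
          · exfalso
            exact hb (Set.mem_iUnion.mpr ⟨j, Or.inr (Or.inl ⟨hp', h⟩)⟩)
          · exact h
        rw [hp'] at heM
        exact ⟨(i, false), hkey, teven i (4 * (j : ℕ) + 2) (by omega) heM⟩
      · -- p + 1 = 4j+2, so p = 4j+1
        have hp' : p = ((4 * (j : ℕ) + 1 : ℕ) : ZMod (4 * m)) :=
          add_right_cancel ((show p + 1 = _ from hp2).trans hc12.symm)
        rw [hp'] at heM
        exact ⟨(i, true), hpos, todd i (4 * (j : ℕ) + 1) (by omega) heM⟩
      · -- p + 1 = 4j+4, so p = 4j+3: b = (i, 4j+3) would be in the cell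
        exfalso
        have hp' : p = ((4 * (j : ℕ) + 3 : ℕ) : ZMod (4 * m)) :=
          add_right_cancel ((show p + 1 = _ from hp4).trans hc34.symm)
        exact hb (Set.mem_iUnion.mpr ⟨j, Or.inl ⟨hp', Or.inr hneg⟩⟩)

end Stmt16
end

section
/- Let instances I₀, …, I_{m−1} of Switch Set Cover each have c colors from a common set C and k switches K₁^i, …, K_k^i. Construct the composite instance I* by: introducing colors o⁰_{α,β}, o¹_{α,β} for 1 ≤ α ≤ k, 1 ≤ β ≤ ⌈log₂ m⌉; adding o¹_{α,β} to every position of K_α^i when the β-th binary digit of i is 1 and o⁰_{α,β} otherwise; letting K*_α be the switch containing all modified positions of K_α^0, …, K_α^{m−1}; and adding switches K_β containing the two positions {o⁰_{1,β}, …, o⁰_{k,β}} and {o¹_{1,β}, …, o¹_{k,β}}. Then I* is a yes-instance of Switch Set Cover if and only if at least one I_i is a yes-instance. -/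
/-!  STATEMENT 19: Correctness of the or-composition algorithm for Switch Set Cover.
Instances `I₀, …, I_{m−1}` share the color set `C` and have `k` switches each (positions
are finite sets of colors).  New colors `o^b_{α,β}` are modeled by `Sum.inr (α, β, b)` with
`α : Fin k`, `β : Fin B`, `b : Bool`, where `B = ⌈log₂ m⌉ = Nat.clog 2 m`.  The position
`P` of switch `K_α^i` is modified by adding `o^{bin(i,β)}_{α,β}` for every `β`; `K*_α`
collects the modified positions of all `K_α^i`; the switch `K_β` has the two positions
`{o⁰_{1,β}, …, o⁰_{k,β}}` and `{o¹_{1,β}, …, o¹_{k,β}}`.  The composite instance `I*` is a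
yes-instance iff some `I_i` is a yes-instance. -/

namespace Stmt19

variable {C : Type*} [DecidableEq C]

/-- The modified position: the original position `P` of switch `α` of instance `i`,
with the binary-identification colors of instance `i` added. -/
def modify (m k B : ℕ) (i : Fin m) (α : Fin k) (P : Finset C) :
    Finset (C ⊕ (Fin k × Fin B × Bool)) :=
  P.image Sum.inl ∪
    (Finset.univ : Finset (Fin B)).image fun β => Sum.inr (α, β, (i : ℕ).testBit (β : ℕ))

/-- The merged switch `K*_α`: all modified positions of the switches `K_α^0, …, K_α^{m−1}`. -/
def Kstar (m k B : ℕ) (K : Fin m → Fin k → Finset (Finset C)) (α : Fin k) :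
    Finset (Finset (C ⊕ (Fin k × Fin B × Bool))) :=
  (Finset.univ : Finset (Fin m)).biUnion fun i => (K i α).image (modify m k B i α)

/-- The instance-chooser switch `K_β` with its two positions. -/
def Kb (k B : ℕ) (β : Fin B) : Finset (Finset (C ⊕ (Fin k × Fin B × Bool))) :=
  { (Finset.univ : Finset (Fin k)).image fun α => Sum.inr (α, β, false),
    (Finset.univ : Finset (Fin k)).image fun α => Sum.inr (α, β, true) }

theorem composition_correct (m k B : ℕ) (hm : 0 < m) (hB : B = Nat.clog 2 m)
    (K : Fin m → Fin k → Finset (Finset C)) :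
    -- the composite instance `I*` is a yes-instance ...
    (∃ (g : Fin k → Finset (C ⊕ (Fin k × Fin B × Bool)))
       (h : Fin B → Finset (C ⊕ (Fin k × Fin B × Bool))),
        (∀ α, g α ∈ Kstar m k B K α) ∧ (∀ β, h β ∈ Kb k B β) ∧
        ∀ x : C ⊕ (Fin k × Fin B × Bool), (∃ α, x ∈ g α) ∨ (∃ β, x ∈ h β)) ↔
    -- ... iff some input instance `I_i` is a yes-instance
    (∃ i : Fin m, ∃ f : Fin k → Finset C,
        (∀ α, f α ∈ K i α) ∧ ∀ x : C, ∃ α, x ∈ f α) := by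
  constructor
  · rintro ⟨g, h, hg, hh, hcov⟩
    have hg' : ∀ α, ∃ (j : Fin m) (P : Finset C),
        P ∈ K j α ∧ modify m k B j α P = g α := by
      intro α
      have := hg α
      simp only [Kstar, Finset.mem_biUnion, Finset.mem_univ, true_and,
        Finset.mem_image] at this
      obtain ⟨j, P, hP, hPg⟩ := this
      exact ⟨j, P, hP, hPg⟩
    choose ι P hP hmod using hg'
    have hh' : ∀ β, ∃ b : Bool,
        h β = (Finset.univ : Finset (Fin k)).image fun α => Sum.inr (α, β, b) := by
      intro β
      have := hh β
      simp only [Kb, Finset.mem_insert, Finset.mem_singleton] at this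
      rcases this with h1 | h1
      · exact ⟨false, h1⟩
      · exact ⟨true, h1⟩
    choose b hb using hh'
    have key : ∀ (α : Fin k) (β : Fin B), ((ι α : ℕ)).testBit (β : ℕ) = !(b β) := by
      intro α β
      rcases hcov (Sum.inr (α, β, !(b β))) with ⟨α', hx⟩ | ⟨β', hx⟩
      · rw [← hmod α'] at hx
        simp only [modify, Finset.mem_union, Finset.mem_image, Finset.mem_univ,
          true_and] at hx
        rcases hx with ⟨c, _, hc⟩ | ⟨β'', hβ''⟩
        · exact absurd hc (by simp)
        · have h1 : α' = α := by
            have := Sum.inr.inj hβ''; exact congrArg Prod.fst this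
          have h2 : β'' = β := by
            have := Sum.inr.inj hβ''; exact congrArg (fun p => p.2.1) this
          have h3 : (ι α' : ℕ).testBit (β'' : ℕ) = !(b β) := by
            have := Sum.inr.inj hβ''; exact congrArg (fun p => p.2.2) this
          rw [h1, h2] at h3; exact h3
      · rw [hb β'] at hx
        simp only [Finset.mem_image, Finset.mem_univ, true_and] at hx
        obtain ⟨α'', hα''⟩ := hx
        have := Sum.inr.inj hα''
        have hβ : β' = β := congrArg (fun p => p.2.1) this
        have hbb : b β' = !(b β) := congrArg (fun p => p.2.2) this
        rw [hβ] at hbb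
        exact absurd hbb (by cases b β <;> simp)
    by_cases hk : 0 < k
    · obtain ⟨α₀⟩ : Nonempty (Fin k) := ⟨⟨0, hk⟩⟩
      refine ⟨ι α₀, fun α => P α, ?_, ?_⟩
      · have hιeq : ∀ α, ι α = ι α₀ := by
          intro α
          have hlt : ∀ α', (ι α' : ℕ) < 2 ^ B := fun α' =>
            lt_of_lt_of_le (ι α').2 (hB ▸ Nat.le_pow_clog one_lt_two m)
          apply Fin.ext
          apply Nat.eq_of_testBit_eq
          intro n
          by_cases hn : n < B
          · rw [key α ⟨n, hn⟩, key α₀ ⟨n, hn⟩]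
          · push_neg at hn
            rw [Nat.testBit_lt_two_pow, Nat.testBit_lt_two_pow]
            · exact lt_of_lt_of_le (hlt α₀) (Nat.pow_le_pow_right (by norm_num) hn)
            · exact lt_of_lt_of_le (hlt α) (Nat.pow_le_pow_right (by norm_num) hn)
        intro α
        rw [← hιeq α]
        exact hP α
      · intro x
        rcases hcov (Sum.inl x) with ⟨α, hx⟩ | ⟨β, hx⟩
        · refine ⟨α, ?_⟩
          rw [← hmod α] at hx
          simp only [modify, Finset.mem_union, Finset.mem_image, Finset.mem_univ,
            true_and] at hx
          rcases hx with ⟨c, hc, hc'⟩ | ⟨β, hβ⟩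
          · rwa [← Sum.inl.inj hc']
          · exact absurd hβ (by simp)
        · rw [hb β] at hx
          simp only [Finset.mem_image, Finset.mem_univ, true_and] at hx
          obtain ⟨α, hα⟩ := hx
          exact absurd hα (by simp)
    · push_neg at hk
      have hk0 : k = 0 := Nat.le_zero.mp hk
      subst hk0
      refine ⟨⟨0, hm⟩, fun α => α.elim0, fun α => α.elim0, fun x => ?_⟩
      rcases hcov (Sum.inl x) with ⟨α, _⟩ | ⟨β, hx⟩
      · exact α.elim0
      · rw [hb β] at hx
        simp only [Finset.mem_image, Finset.mem_univ, true_and] at hx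
        obtain ⟨α, _⟩ := hx
        exact α.elim0
  · rintro ⟨i, f, hf, hfcov⟩
    refine ⟨fun α => modify m k B i α (f α),
      fun β => (Finset.univ : Finset (Fin k)).image fun α =>
        Sum.inr (α, β, !((i : ℕ).testBit (β : ℕ))), ?_, ?_, ?_⟩
    · intro α
      exact Finset.mem_biUnion.mpr ⟨i, Finset.mem_univ _,
        Finset.mem_image_of_mem _ (hf α)⟩
    · intro β
      simp only [Kb, Finset.mem_insert, Finset.mem_singleton]
      cases hib : (i : ℕ).testBit (β : ℕ) <;> simp [hib]
    · rintro (c | ⟨α, β, bb⟩)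
      · obtain ⟨α, hc⟩ := hfcov c
        exact Or.inl ⟨α, Finset.mem_union_left _ (Finset.mem_image_of_mem _ hc)⟩
      · by_cases hbb : bb = (i : ℕ).testBit (β : ℕ)
        · refine Or.inl ⟨α, Finset.mem_union_right _ ?_⟩
          exact Finset.mem_image.mpr ⟨β, Finset.mem_univ _, by rw [hbb]⟩
        · refine Or.inr ⟨β, ?_⟩
          have hb2 : bb = !((i : ℕ).testBit (β : ℕ)) := by
            revert hbb; cases bb <;> cases (i : ℕ).testBit (β : ℕ) <;> simp
          rw [hb2]
          exact Finset.mem_image_of_mem _ (Finset.mem_univ α)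

end Stmt19
end
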